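/- Let f : [a,b] → ℝ be continuous and suppose for every x in [a,b] the upper right Dini derivative of f at x is nonnegative. Then f is nondecreasing on [a,b]. -/

import Mathlib

open Filter Topology

/-- If `f` is continuous on `[a,b]` and its upper right Dini derivative is
nonnegative at every point of `[a,b)`, then `f` is nondecreasing on `[a,b]`. -/
theorem monotone_of_dini_deriv_nonneg (f : ℝ → ℝ) (a b : ℝ) (hab : a ≤ b)
    (hcont : ContinuousOn f (Set.Icc a b))
    (hdini : ∀ x ∈ Set.Ico a b,
      0 ≤ Filter.limsup (fun h : ℝ => ((f (x + h) - f x) / h : EReal)) (𝓝[>] (0:ℝ))) :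
    MonotoneOn f (Set.Icc a b) := by
  intro x hx y hy hxy
  have key : ∀ ⦃t⦄, t ∈ Set.Icc x b → -f t ≤ (fun _ : ℝ => -f x) t := by
    apply image_le_of_liminf_slope_right_le_deriv_boundary
      (B := fun _ => -f x) (B' := fun _ => 0)
    · exact (hcont.mono (Set.Icc_subset_Icc hx.1 le_rfl)).neg
    · exact le_rfl
    · exact continuousOn_const
    · intro z hz
      exact hasDerivWithinAt_const z _ _
    · intro z hz r hr
      have hz' : z ∈ Set.Ico a b := ⟨hx.1.trans hz.1, hz.2⟩
      have hlim := hdini z hz'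
      have hneg : ((-r : ℝ) : EReal) <
          Filter.limsup (fun h : ℝ => ((f (z + h) - f z) / h : EReal)) (𝓝[>] (0:ℝ)) := by
        refine lt_of_lt_of_le ?_ hlim
        exact_mod_cast (neg_neg_iff_pos.mpr hr : (-r : ℝ) < 0)
      have hfreq : ∃ᶠ h in 𝓝[>] (0:ℝ),
          ((-r : ℝ) : EReal) < ((f (z + h) - f z) / h : EReal) :=
        Filter.frequently_lt_of_lt_limsup (by isBoundedDefault) hneg
      have hfreq2 : ∃ᶠ h in 𝓝[>] (0:ℝ), slope (fun t => -f t) z (z + h) < r := by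
        refine hfreq.mp (eventually_nhdsWithin_of_forall ?_)
        intro h hh hlt
        have hh0 : (0:ℝ) < h := hh
        rw [← EReal.coe_sub, ← EReal.coe_div] at hlt
        have hlt' : (-r : ℝ) < (f (z + h) - f z) / h := by exact_mod_cast hlt
        have : slope (fun t => -f t) z (z + h) = -((f (z + h) - f z) / h) := by
          simp [slope_def_field]
          ring
        rw [this]
        linarith
      -- transfer frequently from 𝓝[>] 0 to 𝓝[>] z
      have htend : Tendsto (fun h : ℝ => z + h) (𝓝[>] (0:ℝ)) (𝓝[>] z) := by
        apply tendsto_nhdsWithin_of_tendsto_nhds_of_eventually_within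
        · simpa using (continuous_add_left z).tendsto' 0 z (by simp)
            |>.mono_left nhdsWithin_le_nhds
        · exact eventually_nhdsWithin_of_forall fun h hh => by
            simpa using (hh : (0:ℝ) < h)
      exact htend.frequently hfreq2
  have := key ⟨hxy, hy.2⟩
  simpa using this
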